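/- Each of the functions g₁(x) = 1/(2+x) and g₂(x) = −log(1 − x/2)/(2+x) satisfies, for all x ∈ (0,1), (3x² − 2x)·g(x) + (4x − 16x² + 13x³)·g'(x) + (8x − 10x² − 9x³ + 8x⁴)·g''(x) + (4x² − 4x³ − x⁴ + x⁵)·g'''(x) = 0. -/

import Mathlib

open Real

private lemma hA' (x : ℝ) : HasDerivAt (fun y : ℝ => 2 + y) 1 x := by
  simpa using (hasDerivAt_id x).const_add 2

private lemma hB' (x : ℝ) : HasDerivAt (fun y : ℝ => 2 - y) (-1) x :=
  (hasDerivAt_id x).const_sub 2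

private lemma hI' (x : ℝ) : HasDerivAt (fun y : ℝ => 1 - y / 2) (-(1/2)) x := by
  simpa using ((hasDerivAt_id x).div_const 2).const_sub 1

private lemma hL' (x : ℝ) (hB : (2:ℝ) - x ≠ 0) :
    HasDerivAt (fun y : ℝ => Real.log (1 - y / 2)) (-(1/2)/(1 - x/2)) x := by
  have h12 : 1 - x / 2 ≠ 0 := fun h => hB (by linarith)
  exact (hI' x).log h12

-- derivatives of g₁ = 1/(2+x)
private lemma hf0 (x : ℝ) (hA : (2:ℝ) + x ≠ 0) :
    HasDerivAt (fun y : ℝ => 1 / (2 + y)) (-1 / (2 + x) ^ 2) x := by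
  have := (hasDerivAt_const x (1:ℝ)).fun_div (hA' x) hA
  refine this.congr_deriv (Eq.symm ?_)
  field_simp
  ring

private lemma hf1 (x : ℝ) (hA : (2:ℝ) + x ≠ 0) :
    HasDerivAt (fun y : ℝ => -1 / (2 + y) ^ 2) (2 / (2 + x) ^ 3) x := by
  have := (hasDerivAt_const x (-1:ℝ)).fun_div ((hA' x).fun_pow 2) (pow_ne_zero 2 hA)
  refine this.congr_deriv (Eq.symm ?_)
  field_simp
  ring

private lemma hf2 (x : ℝ) (hA : (2:ℝ) + x ≠ 0) :
    HasDerivAt (fun y : ℝ => 2 / (2 + y) ^ 3) (-6 / (2 + x) ^ 4) x := by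
  have := (hasDerivAt_const x (2:ℝ)).fun_div ((hA' x).fun_pow 3) (pow_ne_zero 3 hA)
  refine this.congr_deriv (Eq.symm ?_)
  field_simp
  ring

-- derivatives of g₂ = -log(1-x/2)/(2+x)
private lemma hk0 (x : ℝ) (hA : (2:ℝ) + x ≠ 0) (hB : (2:ℝ) - x ≠ 0) :
    HasDerivAt (fun y : ℝ => -Real.log (1 - y / 2) / (2 + y))
      (1 / ((2 + x) * (2 - x)) + Real.log (1 - x / 2) / (2 + x) ^ 2) x := by
  have h12 : 1 - x / 2 ≠ 0 := fun h => hB (by linarith)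
  have := ((hL' x hB).fun_neg).fun_div (hA' x) hA
  refine this.congr_deriv (Eq.symm ?_)
  field_simp
  ring

private lemma hk1 (x : ℝ) (hA : (2:ℝ) + x ≠ 0) (hB : (2:ℝ) - x ≠ 0) :
    HasDerivAt (fun y : ℝ => 1 / ((2 + y) * (2 - y)) + Real.log (1 - y / 2) / (2 + y) ^ 2)
      (2 * x / ((2 + x) ^ 2 * (2 - x) ^ 2) - 1 / ((2 + x) ^ 2 * (2 - x))
        - 2 * Real.log (1 - x / 2) / (2 + x) ^ 3) x := by
  have h12 : 1 - x / 2 ≠ 0 := fun h => hB (by linarith)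
  have h1 := (hasDerivAt_const x (1:ℝ)).fun_div ((hA' x).fun_mul (hB' x)) (mul_ne_zero hA hB)
  have h2 := (hL' x hB).fun_div ((hA' x).fun_pow 2) (pow_ne_zero 2 hA)
  have := h1.fun_add h2
  refine this.congr_deriv (Eq.symm ?_)
  field_simp
  ring

private lemma hk2 (x : ℝ) (hA : (2:ℝ) + x ≠ 0) (hB : (2:ℝ) - x ≠ 0) :
    HasDerivAt (fun y : ℝ => 2 * y / ((2 + y) ^ 2 * (2 - y) ^ 2) - 1 / ((2 + y) ^ 2 * (2 - y))
        - 2 * Real.log (1 - y / 2) / (2 + y) ^ 3)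
      (2 / ((2 + x) ^ 2 * (2 - x) ^ 2) + 8 * x ^ 2 / ((2 + x) ^ 3 * (2 - x) ^ 3)
        + (2 * (2 - x) - (2 + x)) / ((2 + x) ^ 3 * (2 - x) ^ 2) + 2 / ((2 + x) ^ 3 * (2 - x))
        + 6 * Real.log (1 - x / 2) / (2 + x) ^ 4) x := by
  have h12 : 1 - x / 2 ≠ 0 := fun h => hB (by linarith)
  have hnum : HasDerivAt (fun y : ℝ => 2 * y) 2 x := by
    simpa using (hasDerivAt_id x).const_mul 2
  have h1 := hnum.fun_div (((hA' x).fun_pow 2).fun_mul ((hB' x).fun_pow 2))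
    (mul_ne_zero (pow_ne_zero 2 hA) (pow_ne_zero 2 hB))
  have h2 := (hasDerivAt_const x (1:ℝ)).fun_div (((hA' x).fun_pow 2).fun_mul (hB' x))
    (mul_ne_zero (pow_ne_zero 2 hA) hB)
  have h3 := ((hL' x hB).const_mul 2).fun_div ((hA' x).fun_pow 3) (pow_ne_zero 3 hA)
  have := (h1.fun_sub h2).fun_sub h3
  refine this.congr_deriv (Eq.symm ?_)
  field_simp
  ring

theorem ode_two_solutions (g₁ g₂ : ℝ → ℝ)
    (hg₁ : ∀ x : ℝ, g₁ x = 1 / (2 + x))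
    (hg₂ : ∀ x : ℝ, g₂ x = -Real.log (1 - x / 2) / (2 + x)) :
    ∀ x ∈ Set.Ioo (0 : ℝ) 1,
      ((3 * x ^ 2 - 2 * x) * g₁ x +
          (4 * x - 16 * x ^ 2 + 13 * x ^ 3) * deriv g₁ x +
          (8 * x - 10 * x ^ 2 - 9 * x ^ 3 + 8 * x ^ 4) * deriv (deriv g₁) x +
          (4 * x ^ 2 - 4 * x ^ 3 - x ^ 4 + x ^ 5) * deriv (deriv (deriv g₁)) x = 0) ∧
      ((3 * x ^ 2 - 2 * x) * g₂ x +
          (4 * x - 16 * x ^ 2 + 13 * x ^ 3) * deriv g₂ x +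
          (8 * x - 10 * x ^ 2 - 9 * x ^ 3 + 8 * x ^ 4) * deriv (deriv g₂) x +
          (4 * x ^ 2 - 4 * x ^ 3 - x ^ 4 + x ^ 5) * deriv (deriv (deriv g₂)) x = 0) := by
  have hg₁' : g₁ = fun y : ℝ => 1 / (2 + y) := funext hg₁
  have hg₂' : g₂ = fun y : ℝ => -Real.log (1 - y / 2) / (2 + y) := funext hg₂
  subst hg₁' hg₂'
  intro x hx
  obtain ⟨hx0, hx1⟩ := hx
  have hxS : x ∈ Set.Ioo (-2 : ℝ) 2 := ⟨by linarith, by linarith⟩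
  have hSne : ∀ y ∈ Set.Ioo (-2 : ℝ) 2, (2:ℝ) + y ≠ 0 ∧ (2:ℝ) - y ≠ 0 := by
    rintro y ⟨h1, h2⟩
    exact ⟨by linarith, by linarith⟩
  -- g₁ derivatives
  have m1 : ∀ y ∈ Set.Ioo (-2 : ℝ) 2, deriv (fun y : ℝ => 1 / (2 + y)) y = -1 / (2 + y) ^ 2 :=
    fun y hy => (hf0 y (hSne y hy).1).deriv
  have m2 : ∀ y ∈ Set.Ioo (-2 : ℝ) 2,
      deriv (deriv (fun y : ℝ => 1 / (2 + y))) y = 2 / (2 + y) ^ 3 := by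
    intro y hy
    have he : deriv (fun y : ℝ => 1 / (2 + y)) =ᶠ[nhds y] fun z => -1 / (2 + z) ^ 2 := by
      filter_upwards [isOpen_Ioo.mem_nhds hy] with z hz using m1 z hz
    rw [he.deriv_eq]
    exact (hf1 y (hSne y hy).1).deriv
  have m3 : deriv (deriv (deriv (fun y : ℝ => 1 / (2 + y)))) x = -6 / (2 + x) ^ 4 := by
    have he : deriv (deriv (fun y : ℝ => 1 / (2 + y))) =ᶠ[nhds x] fun z => 2 / (2 + z) ^ 3 := by
      filter_upwards [isOpen_Ioo.mem_nhds hxS] with z hz using m2 z hz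
    rw [he.deriv_eq]
    exact (hf2 x (hSne x hxS).1).deriv
  -- g₂ derivatives
  have n1 : ∀ y ∈ Set.Ioo (-2 : ℝ) 2,
      deriv (fun y : ℝ => -Real.log (1 - y / 2) / (2 + y)) y
        = 1 / ((2 + y) * (2 - y)) + Real.log (1 - y / 2) / (2 + y) ^ 2 :=
    fun y hy => (hk0 y (hSne y hy).1 (hSne y hy).2).deriv
  have n2 : ∀ y ∈ Set.Ioo (-2 : ℝ) 2,
      deriv (deriv (fun y : ℝ => -Real.log (1 - y / 2) / (2 + y))) y
        = 2 * y / ((2 + y) ^ 2 * (2 - y) ^ 2) - 1 / ((2 + y) ^ 2 * (2 - y))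
          - 2 * Real.log (1 - y / 2) / (2 + y) ^ 3 := by
    intro y hy
    have he : deriv (fun y : ℝ => -Real.log (1 - y / 2) / (2 + y)) =ᶠ[nhds y]
        fun z => 1 / ((2 + z) * (2 - z)) + Real.log (1 - z / 2) / (2 + z) ^ 2 := by
      filter_upwards [isOpen_Ioo.mem_nhds hy] with z hz using n1 z hz
    rw [he.deriv_eq]
    exact (hk1 y (hSne y hy).1 (hSne y hy).2).deriv
  have n3 : deriv (deriv (deriv (fun y : ℝ => -Real.log (1 - y / 2) / (2 + y)))) x
      = 2 / ((2 + x) ^ 2 * (2 - x) ^ 2) + 8 * x ^ 2 / ((2 + x) ^ 3 * (2 - x) ^ 3)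
        + (2 * (2 - x) - (2 + x)) / ((2 + x) ^ 3 * (2 - x) ^ 2) + 2 / ((2 + x) ^ 3 * (2 - x))
        + 6 * Real.log (1 - x / 2) / (2 + x) ^ 4 := by
    have he : deriv (deriv (fun y : ℝ => -Real.log (1 - y / 2) / (2 + y))) =ᶠ[nhds x]
        fun z => 2 * z / ((2 + z) ^ 2 * (2 - z) ^ 2) - 1 / ((2 + z) ^ 2 * (2 - z))
          - 2 * Real.log (1 - z / 2) / (2 + z) ^ 3 := by
      filter_upwards [isOpen_Ioo.mem_nhds hxS] with z hz using n2 z hz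
    rw [he.deriv_eq]
    exact (hk2 x (hSne x hxS).1 (hSne x hxS).2).deriv
  obtain ⟨hA, hB⟩ := hSne x hxS
  constructor
  · rw [m1 x hxS, m2 x hxS, m3]
    simp only
    field_simp
    ring
  · rw [n1 x hxS, n2 x hxS, n3]
    simp only
    field_simp
    ring
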